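/- arXiv:1206.1162 — 2 statements merged into one kernel-verified Lean document; each statement's English description precedes it below -/
import Mathlib

section
/- Let $A_0$ be a closed, densely defined operator on a Banach space $X_0$ such that $0$ is a semi-simple eigenvalue, i.e. $X_0 = N(A_0) \oplus R(A_0)$ with $R(A_0)$ closed and $N(A_0) \neq \{0\}$. Then $0$ is an isolated point of the spectrum $\sigma(A_0)$. -/
set_option maxHeartbeats 1000000


/-- If `A₀` is a closed, densely defined operator on a complex Banach space `X₀` such that
`0` is a semi-simple eigenvalue, i.e. `X₀ = N(A₀) ⊕ R(A₀)` topologically with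
`N(A₀) ≠ {0}` finite-dimensional and `R(A₀)` closed, then `0` is an isolated point of the
spectrum of `A₀`. -/
theorem zero_isolated_in_spectrum
    (X : Type*) [NormedAddCommGroup X] [NormedSpace ℂ X] [CompleteSpace X]
    (D : Submodule ℂ X) (hdense : Dense (D : Set X))
    (A : D →ₗ[ℂ] X)
    (hclosed : IsClosed {p : X × X | ∃ d : D, (d : X) = p.1 ∧ A d = p.2})
    (hker_fin : FiniteDimensional ℂ (LinearMap.ker A))
    (hker_ne : LinearMap.ker A ≠ ⊥)
    (hrange_closed : IsClosed (LinearMap.range A : Set X))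
    (hsum : (LinearMap.ker A).map D.subtype ⊔ LinearMap.range A = ⊤)
    (hdisj : (LinearMap.ker A).map D.subtype ⊓ LinearMap.range A = ⊥)
    -- the spectrum of the (unbounded) operator `A`
    (Spec : Set ℂ)
    (hSpec : Spec = {lam : ℂ | ¬ ∃ B : X →L[ℂ] X,
      (∀ x : X, ∃ d : D, (d : X) = B x ∧ lam • (d : X) - A d = x) ∧
      (∀ d : D, B (lam • (d : X) - A d) = (d : X))}) :
    (0 : ℂ) ∈ Spec ∧ ∃ ε > (0:ℝ), ∀ lam ∈ Spec, lam ≠ 0 → ε ≤ ‖lam‖ := by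
  classical
  subst hSpec
  set Nsub : Submodule ℂ X := (LinearMap.ker A).map D.subtype with hNsub
  set Rsub : Submodule ℂ X := LinearMap.range A with hRsub
  -- basic facts
  have hNR : ∀ v : X, v ∈ Nsub → v ∈ Rsub → v = 0 := by
    intro v h1 h2
    have : v ∈ Nsub ⊓ Rsub := ⟨h1, h2⟩
    rw [hdisj] at this
    simpa using this
  have hcompl : IsCompl Nsub Rsub := ⟨disjoint_iff.mpr hdisj, codisjoint_iff.mpr hsum⟩
  haveI : FiniteDimensional ℂ Nsub := Module.Finite.map _ _
  have hNclosed : IsClosed (Nsub : Set X) := Submodule.closed_of_finiteDimensional _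
  haveI hRcomplete : CompleteSpace Rsub := hrange_closed.completeSpace_coe
  -- uniqueness of preimages in `D ∩ R`
  have huniq : ∀ d d' : D, (d : X) ∈ Rsub → (d' : X) ∈ Rsub → A d = A d' → d = d' := by
    intro d d' hd hd' hA
    have hker : d - d' ∈ LinearMap.ker A := by
      simp [LinearMap.mem_ker, map_sub, hA]
    have hmemN : ((d : X) - (d' : X)) ∈ Nsub := ⟨d - d', hker, rfl⟩
    have hmemR : ((d : X) - (d' : X)) ∈ Rsub := sub_mem hd hd'
    have := hNR _ hmemN hmemR
    exact Subtype.ext (by linear_combination (norm := abel) this)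
  -- totality: the restriction of A to `D ∩ R` is onto `R`
  have htotal : ∀ y : Rsub, ∃ r : Rsub, ∃ d : D, (d : X) = (r : X) ∧ A d = (y : X) := by
    intro y
    obtain ⟨d, hd⟩ := y.2
    -- split off the kernel part of d
    have hdecomp := Submodule.projection_add_projection_eq_self hcompl (d : X)
    obtain ⟨k, hk, hkd⟩ := (Nsub.linearProjOfIsCompl Rsub hcompl (d : X)).2
    refine ⟨⟨(d : X) - (k : X), ?_⟩, d - k, by simp, ?_⟩
    · have hkd' : (k : X) = ((Nsub.linearProjOfIsCompl Rsub hcompl (d : X)) : X) := hkd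
      have : ((d : X) - (k : X)) =
          ((Rsub.linearProjOfIsCompl Nsub hcompl.symm (d : X)) : X) := by
        rw [hkd', sub_eq_iff_eq_add, add_comm]
        exact hdecomp.symm
      rw [this]; exact (Rsub.linearProjOfIsCompl Nsub hcompl.symm (d : X)).2
    · have hk0 : A k = 0 := hk
      rw [map_sub, hk0, sub_zero, hd]
  choose Sfun hSfun using htotal
  have hfunc : ∀ (y r : Rsub), (∃ d : D, (d : X) = (r : X) ∧ A d = (y : X)) → Sfun y = r := by
    rintro y r ⟨d, hd1, hd2⟩
    obtain ⟨d', hd1', hd2'⟩ := hSfun y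
    have : d' = d := huniq d' d (hd1' ▸ (Sfun y).2) (hd1 ▸ r.2) (by rw [hd2, hd2'])
    exact Subtype.ext (by rw [← hd1', this, hd1])
  -- `S` as a linear map
  have hmap_add : ∀ y y' : Rsub, Sfun (y + y') = Sfun y + Sfun y' := by
    intro y y'
    obtain ⟨d, hd1, hd2⟩ := hSfun y
    obtain ⟨d', hd1', hd2'⟩ := hSfun y'
    exact hfunc _ _ ⟨d + d', by push_cast [hd1, hd1']; ring, by push_cast [map_add, hd2, hd2']; ring⟩
  have hmap_smul : ∀ (c : ℂ) (y : Rsub), Sfun (c • y) = c • Sfun y := by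
    intro c y
    obtain ⟨d, hd1, hd2⟩ := hSfun y
    refine hfunc _ _ ⟨c • d, ?_, ?_⟩
    · rw [Submodule.coe_smul, Submodule.coe_smul, hd1]
    · rw [map_smul, hd2, Submodule.coe_smul]
  set Slin : Rsub →ₗ[ℂ] Rsub :=
    { toFun := Sfun, map_add' := hmap_add, map_smul' := hmap_smul } with hSlin
  -- closed graph
  have hgraph : IsClosed ((Slin.graph : Submodule ℂ (Rsub × Rsub)) : Set (Rsub × Rsub)) := by
    have hset : ((Slin.graph : Submodule ℂ (Rsub × Rsub)) : Set (Rsub × Rsub)) =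
        (fun p : Rsub × Rsub => (((p.2 : X), (p.1 : X)) : X × X)) ⁻¹'
          {p : X × X | ∃ d : D, (d : X) = p.1 ∧ A d = p.2} := by
      ext p
      simp only [SetLike.mem_coe, LinearMap.mem_graph_iff, Set.mem_preimage, Set.mem_setOf_eq]
      constructor
      · intro h
        obtain ⟨d, hd1, hd2⟩ := hSfun p.1
        exact ⟨d, by rw [h]; exact hd1, hd2⟩
      · rintro ⟨d, hd1, hd2⟩
        exact (hfunc p.1 p.2 ⟨d, hd1, hd2⟩).symm
    rw [hset]
    exact hclosed.preimage ((continuous_subtype_val.comp continuous_snd).prodMk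
      (continuous_subtype_val.comp continuous_fst))
  have hScont : Continuous Slin := Slin.continuous_of_isClosed_graph hgraph
  set S : Rsub →L[ℂ] Rsub := ⟨Slin, hScont⟩ with hSdef
  -- the projections
  set P : X →L[ℂ] Nsub := Nsub.linearProjOfClosedCompl Rsub hcompl hNclosed hrange_closed with hP
  set Q : X →L[ℂ] Rsub := Rsub.linearProjOfClosedCompl Nsub hcompl.symm hrange_closed hNclosed
    with hQ
  have hPQ : ∀ x : X, ((P x : X) + (Q x : X)) = x := fun x =>
    Submodule.projection_add_projection_eq_self hcompl x
  have hPleft : ∀ v : Nsub, P (v : X) = v := fun v =>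
    Submodule.linearProjOfIsCompl_apply_left hcompl v
  have hPright : ∀ w : Rsub, P (w : X) = 0 := fun w =>
    Submodule.linearProjOfIsCompl_apply_right hcompl w
  have hQleft : ∀ w : Rsub, Q (w : X) = w := fun w =>
    Submodule.linearProjOfIsCompl_apply_left hcompl.symm w
  have hQright : ∀ v : Nsub, Q (v : X) = 0 := fun v =>
    Submodule.linearProjOfIsCompl_apply_right hcompl.symm v
  constructor
  · -- `0 ∈ Spec`
    simp only [Set.mem_setOf_eq]
    rintro ⟨B, _, h2⟩
    obtain ⟨k, hk, hkne⟩ := (Submodule.ne_bot_iff _).mp hker_ne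
    have := h2 k
    have hk0 : A k = 0 := hk
    rw [hk0, zero_smul, sub_zero, map_zero] at this
    exact hkne (by ext; simp [← this])
  · refine ⟨(‖S‖ + 1)⁻¹, by positivity, ?_⟩
    intro lam hlam hne
    by_contra hlt
    push_neg at hlt
    apply hlam
    -- Neumann series inverse of `1 - lam • S`
    have hnorm : ‖lam • S‖ < 1 := by
      have h1 : ‖lam • S‖ ≤ ‖lam‖ * ‖S‖ := by
        apply ContinuousLinearMap.opNorm_le_bound _ (by positivity)
        intro x
        rw [ContinuousLinearMap.smul_apply, norm_smul, mul_assoc]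
        exact mul_le_mul_of_nonneg_left (S.le_opNorm x) (norm_nonneg lam)
      have h2 : ‖lam‖ * (‖S‖ + 1) < (‖S‖ + 1)⁻¹ * (‖S‖ + 1) := by
        have hpos : (0:ℝ) < ‖S‖ + 1 := by positivity
        exact mul_lt_mul_of_pos_right hlt hpos
      rw [inv_mul_cancel₀ (by positivity)] at h2
      nlinarith [norm_nonneg S, norm_nonneg lam]
    set u : (Rsub →L[ℂ] Rsub)ˣ := Units.oneSub (lam • S) hnorm with hu
    set T : Rsub →L[ℂ] Rsub := ↑u⁻¹ with hT
    have hTleft : ∀ y : Rsub, T (y - lam • S y) = y := by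
      intro y
      have h1 : ((↑u⁻¹ * ↑u : Rsub →L[ℂ] Rsub)) y = y := by rw [u.inv_mul]; rfl
      simpa [hu, ContinuousLinearMap.mul_apply, ContinuousLinearMap.sub_apply,
        ContinuousLinearMap.smul_apply] using h1
    have hTright : ∀ y : Rsub, T y - lam • S (T y) = y := by
      intro y
      have h1 : ((↑u * ↑u⁻¹ : Rsub →L[ℂ] Rsub)) y = y := by rw [u.mul_inv]; rfl
      simpa [hu, ContinuousLinearMap.mul_apply, ContinuousLinearMap.sub_apply,
        ContinuousLinearMap.smul_apply] using h1
    -- the resolvent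
    set B : X →L[ℂ] X := lam⁻¹ • (Nsub.subtypeL.comp P) -
      Rsub.subtypeL.comp ((S.comp T).comp Q) with hB
    have hBapp : ∀ x : X, B x = lam⁻¹ • ((P x : X)) - ((S (T (Q x)) : X)) := by
      intro x
      simp [hB, ContinuousLinearMap.sub_apply, ContinuousLinearMap.smul_apply,
        ContinuousLinearMap.comp_apply]
    have hSapp : ∀ y : Rsub, S y = Sfun y := fun _ => rfl
    refine ⟨B, ?_, ?_⟩
    · -- surjectivity direction
      intro x
      obtain ⟨k, hk, hkd⟩ := (P x).2
      have hkd' : (k : X) = ((P x) : X) := hkd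
      obtain ⟨dr, hdr1, hdr2⟩ := hSfun (T (Q x))
      have hdr1' : (dr : X) = ((S (T (Q x))) : X) := hdr1
      have hk0 : A k = 0 := hk
      have hcoe : ((lam⁻¹ • k - dr : D) : X) = lam⁻¹ • (k : X) - (dr : X) := by
        push_cast
        rfl
      refine ⟨lam⁻¹ • k - dr, ?_, ?_⟩
      · rw [hBapp x, hcoe, hkd', hdr1']
      · have hTr : ((T (Q x)) : X) - lam • ((S (T (Q x))) : X) = ((Q x) : X) := by
          have h0 := congrArg (fun z : Rsub => (z : X)) (hTright (Q x))
          push_cast at h0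
          exact h0
        have hmain : lam • ((lam⁻¹ • k - dr : D) : X) - A (lam⁻¹ • k - dr)
            = ((P x) : X) + (((T (Q x)) : X) - lam • ((S (T (Q x))) : X)) := by
          rw [hcoe, map_sub, map_smul, hk0, smul_zero, zero_sub, hdr2, smul_sub, smul_smul,
            mul_inv_cancel₀ hne, one_smul, sub_neg_eq_add, hkd', hdr1']
          abel
        rw [hmain, hTr]
        exact hPQ x
    · -- injectivity direction
      intro d
      obtain ⟨k, hk, hkd⟩ := (P ((d : D) : X)).2
      have hkd' : (k : X) = ((P ((d : D) : X)) : X) := hkd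
      have hk0 : A k = 0 := hk
      set r : D := d - k with hr
      have hd_split : ((d : D) : X) = ((P ((d : D) : X)) : X) + ((r : D) : X) := by
        rw [← hkd', hr]
        push_cast
        abel
      have hrR : ((r : D) : X) ∈ Rsub := by
        have hdecomp := hPQ ((d : D) : X)
        have h2 : ((r : D) : X) = ((Q ((d : D) : X)) : X) := by
          rw [hr]
          push_cast
          rw [hkd', sub_eq_iff_eq_add, add_comm]
          exact hdecomp.symm
        rw [h2]
        exact (Q ((d : D) : X)).2
      have hAr : A r = A d := by rw [hr, map_sub, hk0, sub_zero]
      set y : Rsub := ⟨lam • ((r : D) : X) - A r, sub_mem (Submodule.smul_mem _ _ hrR)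
        (LinearMap.mem_range_self A r)⟩ with hy
      set a : Rsub := ⟨A r, LinearMap.mem_range_self A r⟩ with ha
      have hSa : S a = ⟨((r : D) : X), hrR⟩ := hfunc a _ ⟨r, rfl, rfl⟩
      have hTy : T y = -a := by
        have h1 : (-a) - lam • S (-a) = y := by
          rw [map_neg, hSa]
          ext
          push_cast [hy]
          rw [smul_neg, sub_neg_eq_add]
          abel
        rw [← h1, hTleft]
      have hxval : lam • ((d : D) : X) - A d = ((lam • (P ((d : D) : X)) : Nsub) : X) + (y : X) := by
        have hsm : lam • ((d : D) : X)
            = lam • (((P ((d : D) : X)) : X) + ((r : D) : X)) := by rw [← hd_split]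
        rw [← hAr, hsm, smul_add]
        push_cast [hy]
        abel
      have hPx : P (lam • ((d : D) : X) - A d) = lam • (P ((d : D) : X)) := by
        rw [hxval, map_add, hPleft, hPright, add_zero]
      have hQx : Q (lam • ((d : D) : X) - A d) = y := by
        rw [hxval, map_add, hQleft, hQright, zero_add]
      rw [hBapp, hPx, hQx, hTy, map_neg, hSa]
      push_cast
      rw [smul_smul, inv_mul_cancel₀ hne, one_smul, sub_neg_eq_add]
      exact hd_split.symm
end

section
/- Under the hypotheses of the parameter-continuous implicit function theorem, if in addition $H(x, (y_0, \xi))$ is $C^1$ in $(x, y_0)$ jointly (with $z = (y_0,\xi) \in Y \times W$), then the solution map $\Lambda(y_0, \xi)$ is $C^1$ with respect to $y_0$, and its partial derivative $D_{y_0}\Lambda(y_0,\xi) = -\left(D_x H(\Lambda(y_0,\xi), (y_0,\xi))\right)^{-1} D_{y_0} H(\Lambda(y_0,\xi), (y_0,\xi))$ is jointly continuous in $(y_0, \xi)$. -/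
open Metric Topology Filter

set_option maxHeartbeats 1000000

/-- If additionally `H(x,(y₀,ξ))` is jointly `C¹` in `(x,y₀)`, then the implicit solution
map `Λ(y₀,ξ)` is `C¹` in `y₀` with partial derivative
`D_{y₀}Λ = -(D_xH(Λ,(y₀,ξ)))⁻¹ D_{y₀}H(Λ,(y₀,ξ))`, jointly continuous in `(y₀,ξ)`. -/
theorem implicit_map_C1_in_y0
    (X Y W : Type*) [NormedAddCommGroup X] [NormedSpace ℝ X] [CompleteSpace X]
    [NormedAddCommGroup Y] [NormedSpace ℝ Y] [CompleteSpace Y]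
    [NormedAddCommGroup W] [NormedSpace ℝ W]
    (ρ : ℝ) (hρ : 0 < ρ) (H : X → Y → W → X)
    (hcont : ContinuousOn (fun p : X × Y × W => H p.1 p.2.1 p.2.2)
      (ball 0 ρ ×ˢ ball 0 ρ ×ˢ ball 0 ρ))
    (Dx : X → Y → W → (X →L[ℝ] X)) (Dy : X → Y → W → (Y →L[ℝ] X))
    (hderiv : ∀ x ∈ ball (0:X) ρ, ∀ y ∈ ball (0:Y) ρ, ∀ ξ ∈ ball (0:W) ρ,
      HasFDerivAt (fun q : X × Y => H q.1 q.2 ξ) ((Dx x y ξ).coprod (Dy x y ξ)) (x, y))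
    (hDcont : ContinuousOn
      (fun p : X × Y × W => (Dx p.1 p.2.1 p.2.2, Dy p.1 p.2.1 p.2.2))
      (ball 0 ρ ×ˢ ball 0 ρ ×ˢ ball 0 ρ))
    (hH0 : H 0 0 0 = 0) (hDx0 : Dx 0 0 0 = ContinuousLinearMap.id ℝ X)
    (r : ℝ) (hr : 0 < r) (hrρ : r ≤ ρ) (Λ : Y → W → X)
    (hΛcont : ContinuousOn (fun p : Y × W => Λ p.1 p.2) (ball 0 r ×ˢ ball 0 r))
    (hΛ0 : Λ 0 0 = 0)
    (hsol : ∀ y ∈ ball (0:Y) r, ∀ ξ ∈ ball (0:W) r,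
      Λ y ξ ∈ ball (0:X) ρ ∧ H (Λ y ξ) y ξ = 0) :
    ∃ r' > (0:ℝ), r' ≤ r ∧
      (∀ y ∈ ball (0:Y) r', ∀ ξ ∈ ball (0:W) r',
        HasFDerivAt (fun y' => Λ y' ξ)
          (-((Dx (Λ y ξ) y ξ).inverse.comp (Dy (Λ y ξ) y ξ))) y) ∧
      ContinuousOn
        (fun p : Y × W => -((Dx (Λ p.1 p.2) p.1 p.2).inverse.comp (Dy (Λ p.1 p.2) p.1 p.2)))
        (ball 0 r' ×ˢ ball 0 r') := by
  have hrρ' : ball (0:Y) r ⊆ ball (0:Y) ρ := ball_subset_ball hrρ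
  have hrρW : ball (0:W) r ⊆ ball (0:W) ρ := ball_subset_ball hrρ
  -- joint continuity of the derivatives along the solution map
  have hT : ContinuousOn (fun p : Y × W => ((Λ p.1 p.2, p.1, p.2) : X × Y × W))
      (ball 0 r ×ˢ ball 0 r) :=
    hΛcont.prodMk ((continuous_fst.continuousOn).prodMk continuous_snd.continuousOn)
  have hTmaps : Set.MapsTo (fun p : Y × W => ((Λ p.1 p.2, p.1, p.2) : X × Y × W))
      (ball 0 r ×ˢ ball 0 r) (ball 0 ρ ×ˢ ball 0 ρ ×ˢ ball 0 ρ) := by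
    rintro ⟨y, ξ⟩ ⟨hy, hξ⟩
    exact ⟨(hsol y hy ξ hξ).1, hrρ' hy, hrρW hξ⟩
  have hDY : ContinuousOn (fun p : Y × W =>
      (Dx (Λ p.1 p.2) p.1 p.2, Dy (Λ p.1 p.2) p.1 p.2)) (ball 0 r ×ˢ ball 0 r) :=
    hDcont.comp hT hTmaps
  have hDX : ContinuousOn (fun p : Y × W => Dx (Λ p.1 p.2) p.1 p.2)
      (ball 0 r ×ˢ ball 0 r) := continuous_fst.comp_continuousOn hDY
  have h00 : ((0:Y), (0:W)) ∈ ball (0:Y) r ×ˢ ball (0:W) r := by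
    constructor <;> simpa using hr
  have hopen : IsOpen (ball (0:Y) r ×ˢ ball (0:W) r) := isOpen_ball.prod isOpen_ball
  have hDXat : ContinuousAt (fun p : Y × W => Dx (Λ p.1 p.2) p.1 p.2) (0, 0) :=
    (hDX (0,0) h00).continuousAt (hopen.mem_nhds h00)
  have hev : ∀ᶠ p : Y × W in 𝓝 ((0:Y), (0:W)), ‖Dx (Λ p.1 p.2) p.1 p.2 - 1‖ < 1/2 := by
    have hb : ball (1 : X →L[ℝ] X) (1/2) ∈ 𝓝 (Dx (Λ (0:Y) (0:W)) 0 0) := by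
      rw [hΛ0, hDx0]
      exact ball_mem_nhds _ (by norm_num)
    filter_upwards [hDXat hb] with p hp
    simpa [mem_ball_iff_norm, dist_eq_norm] using hp
  obtain ⟨ε, hε, hball⟩ := Metric.eventually_nhds_iff_ball.mp hev
  set r' := min ε r with hr'def
  have hr'pos : 0 < r' := lt_min hε hr
  have hr'r : r' ≤ r := min_le_right _ _
  have hsmall : ∀ y ∈ ball (0:Y) r', ∀ ξ ∈ ball (0:W) r',
      ‖Dx (Λ y ξ) y ξ - 1‖ < 1/2 := by
    intro y hy ξ hξ
    have hmem : ((y, ξ) : Y × W) ∈ ball ((0:Y), (0:W)) ε := by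
      rw [← ball_prod_same]
      exact ⟨ball_subset_ball (min_le_left _ _) hy, ball_subset_ball (min_le_left _ _) hξ⟩
    exact hball (y, ξ) hmem
  have hunit : ∀ y ∈ ball (0:Y) r', ∀ ξ ∈ ball (0:W) r', IsUnit (Dx (Λ y ξ) y ξ) := by
    intro y hy ξ hξ
    have h1 : ‖(1 : X →L[ℝ] X) - Dx (Λ y ξ) y ξ‖ < 1 := by
      rw [norm_sub_rev]
      linarith [hsmall y hy ξ hξ]
    exact (sub_sub_self (1 : X →L[ℝ] X) (Dx (Λ y ξ) y ξ)) ▸ (Units.oneSub _ h1).isUnit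
  have hinv_eq : ∀ (A : X →L[ℝ] X), A.inverse = Ring.inverse A := fun A =>
    (congrFun (ContinuousLinearMap.ringInverse_eq_inverse (R := ℝ) (M := X)) A).symm
  refine ⟨r', hr'pos, hr'r, ?_, ?_⟩
  · -- differentiability
    intro y hy ξ hξ
    have hyr : y ∈ ball (0:Y) r := ball_subset_ball hr'r hy
    have hξr : ξ ∈ ball (0:W) r := ball_subset_ball hr'r hξ
    obtain ⟨hx₀ρ, hHx₀⟩ := hsol y hyr ξ hξr
    set x₀ := Λ y ξ with hx₀def
    set A := Dx x₀ y ξ with hAdef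
    set B := Dy x₀ y ξ with hBdef
    have hAunit : IsUnit A := hunit y hy ξ hξ
    have hAinvA : ∀ v, A.inverse (A v) = v := by
      intro v
      have h1 : A.inverse * A = 1 := by
        rw [hinv_eq A]
        exact Ring.inverse_mul_cancel _ hAunit
      calc A.inverse (A v) = (A.inverse * A) v := rfl
        _ = v := by rw [h1]; rfl
    have hξρ : ξ ∈ ball (0:W) ρ := hrρW hξr
    -- strict differentiability of (x,y) ↦ H x y ξ at (x₀, y)
    have hmem2 : (x₀, y) ∈ ball (0:X) ρ ×ˢ ball (0:Y) ρ := ⟨hx₀ρ, hrρ' hyr⟩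
    have hopen2 : IsOpen (ball (0:X) ρ ×ˢ ball (0:Y) ρ) := isOpen_ball.prod isOpen_ball
    have strict : HasStrictFDerivAt (fun q : X × Y => H q.1 q.2 ξ) (A.coprod B) (x₀, y) := by
      have hev2 : ∀ᶠ q : X × Y in 𝓝 (x₀, y),
          HasFDerivAt (fun q : X × Y => H q.1 q.2 ξ)
            ((Dx q.1 q.2 ξ).coprod (Dy q.1 q.2 ξ)) q := by
        filter_upwards [hopen2.mem_nhds hmem2] with q hq
        exact hderiv q.1 hq.1 q.2 hq.2 ξ hξρ
      have h1 : ContinuousOn (fun q : X × Y => (Dx q.1 q.2 ξ, Dy q.1 q.2 ξ))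
          (ball 0 ρ ×ˢ ball 0 ρ) := by
        exact hDcont.comp
          ((continuous_fst.prodMk (continuous_snd.prodMk continuous_const)).continuousOn)
          (fun q hq => ⟨hq.1, hq.2, hξρ⟩)
      have h2 : ContinuousAt (fun q : X × Y => (Dx q.1 q.2 ξ, Dy q.1 q.2 ξ)) (x₀, y) :=
        (h1 _ hmem2).continuousAt (hopen2.mem_nhds hmem2)
      have hcop : Continuous fun fg : (X →L[ℝ] X) × (Y →L[ℝ] X) => fg.1.coprod fg.2 := by
        have heq : (fun fg : (X →L[ℝ] X) × (Y →L[ℝ] X) => fg.1.coprod fg.2) =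
            fun fg => fg.1.comp (ContinuousLinearMap.fst ℝ X Y)
              + fg.2.comp (ContinuousLinearMap.snd ℝ X Y) := by
          funext fg
          exact (ContinuousLinearMap.comp_fst_add_comp_snd _ _).symm
        rw [heq]
        exact (continuous_fst.clm_comp continuous_const).add
          (continuous_snd.clm_comp continuous_const)
      have hcontD : ContinuousAt
          (fun q : X × Y => (Dx q.1 q.2 ξ).coprod (Dy q.1 q.2 ξ)) (x₀, y) :=
        hcop.continuousAt.comp h2
      exact hasStrictFDerivAt_of_hasFDerivAt_of_continuousAt hev2 hcontD
    -- continuity of Λ in y' at y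
    have hΛat : ContinuousAt (fun y' => Λ y' ξ) y := by
      have h3 : ContinuousOn (fun y' => Λ y' ξ) (ball (0:Y) r) :=
        hΛcont.comp (continuous_id.prodMk continuous_const).continuousOn
          (fun y' hy' => ⟨hy', hξr⟩)
      exact (h3 y hyr).continuousAt (isOpen_ball.mem_nhds hyr)
    have htend : Filter.Tendsto (fun y' => (((Λ y' ξ, y'), (x₀, y)) : (X × Y) × (X × Y)))
        (𝓝 y) (𝓝 ((x₀, y), (x₀, y))) :=
      (hΛat.prodMk_nhds continuousAt_id).prodMk_nhds tendsto_const_nhds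
    have key := strict.isLittleO.comp_tendsto htend
    have heq0 : ∀ᶠ y' in 𝓝 y, H (Λ y' ξ) y' ξ = 0 := by
      filter_upwards [isOpen_ball.mem_nhds hyr] with y' hy'
      exact (hsol y' hy' ξ hξr).2
    have e : (fun y' => A (Λ y' ξ - x₀) + B (y' - y)) =o[𝓝 y]
        fun y' => ((Λ y' ξ - x₀, y' - y) : X × Y) := by
      have e0 := key.congr' (f₂ := fun y' => -(A (Λ y' ξ - x₀) + B (y' - y)))
        (g₂ := fun y' => ((Λ y' ξ - x₀, y' - y) : X × Y)) ?_ ?_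
      · simpa using e0.neg_left
      · filter_upwards [heq0] with y' h
        simp only [Function.comp_apply]
        rw [h, hHx₀]
        have : ((Λ y' ξ, y') : X × Y) - (x₀, y) = (Λ y' ξ - x₀, y' - y) := rfl
        rw [this, ContinuousLinearMap.coprod_apply]
        abel
      · exact Filter.Eventually.of_forall fun y' => rfl
    set N := ‖A.inverse‖ with hNdef
    have hN : 0 ≤ N := norm_nonneg _
    have hεpos2 : (0:ℝ) < (2 * (N + 1))⁻¹ := by positivity
    have hbound := e.def hεpos2
    have bigO : (fun y' => ((Λ y' ξ - x₀, y' - y) : X × Y)) =O[𝓝 y] fun y' => y' - y := by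
      rw [Asymptotics.isBigO_iff]
      refine ⟨1 + 2 * (N * ‖B‖), ?_⟩
      filter_upwards [hbound] with y' h
      set dx := Λ y' ξ - x₀ with hdx
      set dy := y' - y with hdy
      have hmax : ‖((dx, dy) : X × Y)‖ = max ‖dx‖ ‖dy‖ := rfl
      have h1 : ‖dx‖ ≤ N * ‖A dx‖ := by
        calc ‖dx‖ = ‖A.inverse (A dx)‖ := by rw [hAinvA]
          _ ≤ N * ‖A dx‖ := A.inverse.le_opNorm _
      have h2 : ‖A dx‖ ≤ (2 * (N + 1))⁻¹ * (‖dx‖ + ‖dy‖) + ‖B‖ * ‖dy‖ := by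
        have hsplit : A dx = (A dx + B dy) - B dy := by abel
        calc ‖A dx‖ = ‖(A dx + B dy) - B dy‖ := by rw [← hsplit]
          _ ≤ ‖A dx + B dy‖ + ‖B dy‖ := norm_sub_le _ _
          _ ≤ (2 * (N + 1))⁻¹ * ‖((dx, dy) : X × Y)‖ + ‖B‖ * ‖dy‖ := by
              gcongr
              exact B.le_opNorm _
          _ ≤ (2 * (N + 1))⁻¹ * (‖dx‖ + ‖dy‖) + ‖B‖ * ‖dy‖ := by
              gcongr
              rw [hmax]
              exact max_le (le_add_of_nonneg_right (norm_nonneg _))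
                (le_add_of_nonneg_left (norm_nonneg _))
      have hNε : N * (2 * (N + 1))⁻¹ ≤ 1/2 := by
        rw [← div_eq_mul_inv, div_le_div_iff₀ (by positivity) (by norm_num)]
        linarith
      have hdxbound : ‖dx‖ ≤ (1 + 2 * (N * ‖B‖)) * ‖dy‖ := by
        have h3 : ‖dx‖ ≤ N * ((2 * (N + 1))⁻¹ * (‖dx‖ + ‖dy‖) + ‖B‖ * ‖dy‖) :=
          h1.trans (by gcongr)
        have h4 : N * (2 * (N + 1))⁻¹ * (‖dx‖ + ‖dy‖) ≤ (1/2) * (‖dx‖ + ‖dy‖) :=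
          mul_le_mul_of_nonneg_right hNε (by positivity)
        have h5 : ‖dx‖ ≤ (1/2) * (‖dx‖ + ‖dy‖) + N * (‖B‖ * ‖dy‖) := by
          calc ‖dx‖ ≤ N * ((2 * (N + 1))⁻¹ * (‖dx‖ + ‖dy‖) + ‖B‖ * ‖dy‖) := h3
            _ = N * (2 * (N + 1))⁻¹ * (‖dx‖ + ‖dy‖) + N * (‖B‖ * ‖dy‖) := by ring
            _ ≤ (1/2) * (‖dx‖ + ‖dy‖) + N * (‖B‖ * ‖dy‖) := by linarith
        have hexp : (1 + 2 * (N * ‖B‖)) * ‖dy‖ = ‖dy‖ + 2 * (N * (‖B‖ * ‖dy‖)) := by ring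
        rw [hexp]
        linarith
      rw [hmax]
      have hdy2 : ‖dy‖ ≤ (1 + 2 * (N * ‖B‖)) * ‖dy‖ := by
        have hb0 : 0 ≤ N * ‖B‖ := mul_nonneg hN (norm_nonneg _)
        nlinarith [norm_nonneg dy]
      exact max_le hdxbound hdy2
    have final : (fun y' => A.inverse (A (Λ y' ξ - x₀) + B (y' - y))) =o[𝓝 y]
        fun y' => y' - y :=
      (A.inverse.isBigO_comp _ _).trans_isLittleO (e.trans_isBigO bigO)
    refine hasFDerivAt_iff_isLittleO.mpr ?_
    refine final.congr (fun y' => ?_) (fun _ => rfl)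
    rw [map_add, hAinvA]
    simp only [ContinuousLinearMap.neg_apply, ContinuousLinearMap.coe_comp',
      Function.comp_apply]
    abel
  · -- joint continuity of the derivative formula
    have hsub : ball (0:Y) r' ×ˢ ball (0:W) r' ⊆ ball (0:Y) r ×ˢ ball (0:W) r :=
      Set.prod_mono (ball_subset_ball hr'r) (ball_subset_ball hr'r)
    have hDXr' : ContinuousOn (fun p : Y × W => Dx (Λ p.1 p.2) p.1 p.2)
        (ball 0 r' ×ˢ ball 0 r') := hDX.mono hsub
    have hDYr' : ContinuousOn (fun p : Y × W => Dy (Λ p.1 p.2) p.1 p.2)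
        (ball 0 r' ×ˢ ball 0 r') := (continuous_snd.comp_continuousOn hDY).mono hsub
    have hinv : ContinuousOn (fun p : Y × W => (Dx (Λ p.1 p.2) p.1 p.2).inverse)
        (ball 0 r' ×ˢ ball 0 r') := by
      intro p hp
      have hu : IsUnit (Dx (Λ p.1 p.2) p.1 p.2) := hunit p.1 hp.1 p.2 hp.2
      have hc : ContinuousAt Ring.inverse (Dx (Λ p.1 p.2) p.1 p.2) := by
        have := NormedRing.inverse_continuousAt hu.unit
        rwa [IsUnit.unit_spec] at this
      have heq : (fun p : Y × W => (Dx (Λ p.1 p.2) p.1 p.2).inverse) =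
          fun p : Y × W => Ring.inverse (Dx (Λ p.1 p.2) p.1 p.2) := by
        funext q
        exact hinv_eq _
      rw [heq]
      exact ContinuousAt.comp_continuousWithinAt (f := fun p : Y × W => Dx (Λ p.1 p.2) p.1 p.2)
        (g := Ring.inverse) hc (hDXr' p hp)
    exact (hinv.clm_comp hDYr').neg
end
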